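/- In the multipoint model, let p be a site with existence probability entries; fix a query q ∈ ℝ^2 and a site p_i^j. The probability that the segment q p_i^j is the witness edge of q ∉ conv(B) equals γ_i^j · ∏_{k ≠ i} (1 − ∑_{l : p_k^l ∈ G_{i,j}} γ_k^l), where G_{i,j} is the set of sites strictly right of the oriented line from q through p_i^j. -/

import Mathlib

attribute [local instance] Classical.propDecidable

noncomputable section

abbrev E2 := EuclideanSpace ℝ (Fin 2)

/-- The 2D cross product: `s` is strictly to the right of the oriented line from
`q` through `p` iff `cross2 (p - q) (s - q) < 0`. -/
def cross2 (a b : E2) : ℝ := a 0 * b 1 - a 1 * b 0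

/-- The set of possible outcomes in the multipoint model: for each uncertain point
`k`, either one of its sites is realized or none is. -/
def outcomes (m : ℕ) (Pm : Fin m → Finset E2) :
    Finset (∀ k ∈ (Finset.univ : Finset (Fin m)), Option E2) :=
  Finset.univ.pi (fun k => insert (none : Option E2) ((Pm k).image some))

/-- The probability of an outcome: independently, uncertain point `k` realizes
site `s` with probability `γ k s`, and no site with the remaining probability. -/
def outcomeProb (m : ℕ) (Pm : Fin m → Finset E2) (γ : Fin m → E2 → ℝ)
    (f : ∀ k ∈ (Finset.univ : Finset (Fin m)), Option E2) : ℝ :=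
  ∏ k : Fin m, Option.elim (f k (Finset.mem_univ k)) (1 - ∑ s ∈ Pm k, γ k s) (γ k)

/-- The probability that `q pᵢʲ` is the witness edge of `q ∉ conv(B)` equals
`γᵢʲ · ∏_{k ≠ i} (1 − ∑_{l : p_k^l ∈ G_{i,j}} γ_k^l)`, where `G_{i,j}` is the set
of sites strictly right of the oriented line from `q` through `pᵢʲ`. -/
theorem witness_edge_prob_multipoint
    (m : ℕ) (Pm : Fin m → Finset E2) (γ : Fin m → E2 → ℝ)
    (hγ : ∀ k, ∀ s ∈ Pm k, 0 < γ k s ∧ γ k s ≤ 1)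
    (hsum : ∀ k, ∑ s ∈ Pm k, γ k s ≤ 1)
    (hdisj : ∀ k l : Fin m, k ≠ l → Disjoint (Pm k) (Pm l))
    (q : E2) (hq : ∀ k, q ∉ Pm k)
    (hgp : ∀ s t : E2, (∃ k, s ∈ Pm k) → (∃ k, t ∈ Pm k) → s ≠ t →
      ¬ Collinear ℝ ({q, s, t} : Set E2))
    (i : Fin m) (pij : E2) (hpij : pij ∈ Pm i) :
    (∑ f ∈ outcomes m Pm,
      if f i (Finset.mem_univ i) = some pij ∧
          (∀ k : Fin m, ∀ s : E2, f k (Finset.mem_univ k) = some s →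
            0 ≤ cross2 (pij - q) (s - q)) then
        outcomeProb m Pm γ f else 0) =
    γ i pij *
      ∏ k ∈ Finset.univ.erase i,
        (1 - ∑ s ∈ (Pm k).filter (fun s => cross2 (pij - q) (s - q) < 0), γ k s) := by
  classical
  set g : Fin m → Option E2 → ℝ := fun k x =>
    if k = i then (if x = some pij then γ i pij else 0)
    else Option.elim x (1 - ∑ s ∈ Pm k, γ k s)
      (fun s => if 0 ≤ cross2 (pij - q) (s - q) then γ k s else 0) with hg
  have key : ∀ f ∈ outcomes m Pm,
      (if f i (Finset.mem_univ i) = some pij ∧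
          (∀ k : Fin m, ∀ s : E2, f k (Finset.mem_univ k) = some s →
            0 ≤ cross2 (pij - q) (s - q)) then
        outcomeProb m Pm γ f else 0) =
      ∏ k : Fin m, g k (f k (Finset.mem_univ k)) := by
    intro f hf
    by_cases hc : f i (Finset.mem_univ i) = some pij ∧
        (∀ k : Fin m, ∀ s : E2, f k (Finset.mem_univ k) = some s →
          0 ≤ cross2 (pij - q) (s - q))
    · rw [if_pos hc]
      unfold outcomeProb
      refine Finset.prod_congr rfl fun k _ => ?_
      by_cases hki : k = i
      · subst hki
        rw [hc.1]
        simp [hg]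
      · simp only [hg, if_neg hki]
        cases hx : f k (Finset.mem_univ k) with
        | none => rfl
        | some s =>
          simp [if_pos (hc.2 k s hx)]
    · rw [if_neg hc]
      symm
      rw [not_and_or] at hc
      rcases hc with hc | hc
      · exact Finset.prod_eq_zero (Finset.mem_univ i) (by simp [hg, hc])
      · push_neg at hc
        obtain ⟨k, s, hks, hcr⟩ := hc
        by_cases hki : k = i
        · subst hki
          refine Finset.prod_eq_zero (Finset.mem_univ k) ?_
          have h1 : f k (Finset.mem_univ k) ≠ some pij := by
            intro h1
            rw [h1] at hks
            obtain rfl : pij = s := by injection hks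
            simp only [cross2] at hcr
            linarith
          simp [hg, h1]
        · refine Finset.prod_eq_zero (Finset.mem_univ k) ?_
          simp only [hg, if_neg hki, hks, Option.elim]
          rw [if_neg (not_le.mpr hcr)]
  rw [Finset.sum_congr rfl key]
  have := Finset.prod_sum (Finset.univ : Finset (Fin m))
    (fun k => insert (none : Option E2) ((Pm k).image some)) g
  rw [show (outcomes m Pm) = Finset.univ.pi
      (fun k => insert (none : Option E2) ((Pm k).image some)) from rfl]
  have hform : ∀ p ∈ (Finset.univ : Finset (Fin m)).pi
      (fun k => insert (none : Option E2) ((Pm k).image some)),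
      (∏ k : Fin m, g k (p k (Finset.mem_univ k))) =
      ∏ x ∈ (Finset.univ : Finset (Fin m)).attach, g x.1 (p x.1 (Finset.mem_univ x.1)) := by
    intro p _
    rw [← Finset.prod_attach Finset.univ (fun k => g k (p k (Finset.mem_univ k)))]
  rw [Finset.sum_congr rfl hform, ← this]
  -- now compute the product of sums
  have hi : ∑ x ∈ insert (none : Option E2) ((Pm i).image some), g i x = γ i pij := by
    rw [Finset.sum_insert (by simp)]
    simp only [hg, if_pos rfl]
    rw [Finset.sum_image (fun a _ b _ h => by injection h)]
    rw [if_neg (by simp)]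
    rw [Finset.sum_eq_single pij (fun b _ hb => by simp [hb]) (fun h => absurd hpij h)]
    simp
  have hk : ∀ k : Fin m, k ≠ i →
      ∑ x ∈ insert (none : Option E2) ((Pm k).image some), g k x =
      1 - ∑ s ∈ (Pm k).filter (fun s => cross2 (pij - q) (s - q) < 0), γ k s := by
    intro k hki
    rw [Finset.sum_insert (by simp)]
    rw [Finset.sum_image (fun a _ b _ h => by injection h)]
    simp only [hg, if_neg hki, Option.elim]
    have hsplit : ∑ s ∈ Pm k, (if 0 ≤ cross2 (pij - q) (s - q) then γ k s else 0)
        = ∑ s ∈ (Pm k).filter (fun s => ¬ cross2 (pij - q) (s - q) < 0), γ k s := by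
      rw [Finset.sum_filter]
      refine Finset.sum_congr rfl fun s _ => ?_
      by_cases h : cross2 (pij - q) (s - q) < 0
      · rw [if_neg (not_le.mpr h), if_neg (not_not_intro h)]
      · rw [if_pos (not_lt.mp h), if_pos h]
    rw [hsplit]
    have := Finset.sum_filter_add_sum_filter_not (Pm k)
      (fun s => cross2 (pij - q) (s - q) < 0) (γ k)
    ring_nf
    linarith [this]
  rw [← Finset.prod_erase_mul Finset.univ _ (Finset.mem_univ i), hi, mul_comm]
  congr 1
  exact Finset.prod_congr rfl fun k hk' => hk k (Finset.mem_erase.1 hk').1
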